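/- Let n ≥ 1 be an integer and 1 ≤ r ≤ 2, 1 ≤ s ≤ 2. For a measurable function F : [0,∞)×ℝ^n → ℂ and t ∈ ℝ, let Γ_t = {(t′,x) : t′ ≥ 0, t−1 ≤ t′+|x| ≤ t+1}. Then ∫_0^∞ ‖F·1_{Γ_t}‖²_{L^r_{t′}L^s_x} dt ≤ 2 ‖F‖²_{L^r_{t′}L^s_x([0,∞)×ℝ^n)}. -/

import Mathlib

open MeasureTheory Metric Real Set
open scoped ENNReal NNReal

noncomputable section

/-- Euclidean space `ℝⁿ`. -/
abbrev Euc (n : ℕ) := EuclideanSpace ℝ (Fin n)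

/-- The Fourier transform with the convention `f̂(ξ) = ∫ e^{-i x·ξ} f(x) dx`. -/
def FT {n : ℕ} (f : Euc n → ℂ) (ξ : Euc n) : ℂ :=
  ∫ x : Euc n, Complex.exp (-(Complex.I * ((inner ℝ x ξ : ℝ) : ℂ))) * f x

/-- Squared inhomogeneous Sobolev norm `‖f‖²_{H^γ} = ∫ (1+|ξ|²)^γ |f̂(ξ)|² dξ`. -/
def HSq {n : ℕ} (γ : ℝ) (f : Euc n → ℂ) : ℝ≥0∞ :=
  ∫⁻ ξ : Euc n, ENNReal.ofReal ((1 + ‖ξ‖ ^ 2) ^ γ) * (‖FT f ξ‖₊ : ℝ≥0∞) ^ 2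

/-- Inhomogeneous Sobolev norm `‖f‖_{H^γ}`. -/
def HNorm {n : ℕ} (γ : ℝ) (f : Euc n → ℂ) : ℝ≥0∞ := HSq γ f ^ (1 / 2 : ℝ)

/-- Squared homogeneous Sobolev norm `‖f‖²_{Ḣ^γ} = ∫ |ξ|^{2γ} |f̂(ξ)|² dξ`. -/
def HdotSq {n : ℕ} (γ : ℝ) (f : Euc n → ℂ) : ℝ≥0∞ :=
  ∫⁻ ξ : Euc n, ENNReal.ofReal (‖ξ‖ ^ (2 * γ)) * (‖FT f ξ‖₊ : ℝ≥0∞) ^ 2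

/-- Homogeneous Sobolev norm `‖f‖_{Ḣ^γ}`. -/
def HdotNorm {n : ℕ} (γ : ℝ) (f : Euc n → ℂ) : ℝ≥0∞ := HdotSq γ f ^ (1 / 2 : ℝ)

/-- `L^r`-norm in time of an `ℝ≥0∞`-valued function (ess-sup if `r = ∞`). -/
def LpT (r : ℝ≥0∞) (g : ℝ → ℝ≥0∞) : ℝ≥0∞ :=
  if r = ∞ then essSup g volume
  else (∫⁻ t : ℝ, g t ^ r.toReal) ^ (1 / r.toReal)

/-- Mixed norm `‖F‖_{L^r_t L^s_x(ℝ×ℝⁿ)}`. -/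
def mixedNorm {n : ℕ} (r s : ℝ≥0∞) (F : ℝ → Euc n → ℂ) : ℝ≥0∞ :=
  LpT r fun t => eLpNorm (F t) s volume

/-- Restriction of a space-time function to a set `A`, extended by zero. -/
def restr {n : ℕ} (A : Set (ℝ × Euc n)) (F : ℝ → Euc n → ℂ) : ℝ → Euc n → ℂ :=
  fun t x => A.indicator (fun p : ℝ × Euc n => F p.1 p.2) (t, x)

/-- The Laplace–Beltrami operator
`Δ_g u = (det g)^{-1/2} ∂_i ((det g)^{1/2} g^{ij} ∂_j u)` of a Riemannian metric `g`. -/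
def LaplaceBeltrami {n : ℕ} (g : Euc n → Matrix (Fin n) (Fin n) ℝ) (u : Euc n → ℂ)
    (x : Euc n) : ℂ :=
  (Real.sqrt ((g x).det))⁻¹ •
    ∑ i : Fin n, fderiv ℝ
      (fun y => Real.sqrt ((g y).det) •
        ∑ j : Fin n, ((g y)⁻¹ i j) • fderiv ℝ u y (EuclideanSpace.single j 1)) x
      (EuclideanSpace.single i 1)

/-- The Euclidean Laplacian `Δu = ∑ ∂²u/∂x_i²`. -/
def EucLap {n : ℕ} (u : Euc n → ℂ) (x : Euc n) : ℂ :=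
  ∑ i : Fin n, fderiv ℝ (fun y => fderiv ℝ u y (EuclideanSpace.single i 1)) x
    (EuclideanSpace.single i 1)

/-- Time derivative `∂_t u` of a space-time function. -/
def dt {n : ℕ} (u : ℝ → Euc n → ℂ) : ℝ → Euc n → ℂ :=
  fun t x => deriv (fun τ => u τ x) t

/-- Spatial partial derivative `∂_{x_i} u`. -/
def dxi {n : ℕ} (i : Fin n) (u : Euc n → ℂ) (x : Euc n) : ℂ :=
  fderiv ℝ u x (EuclideanSpace.single i 1)

/-- The surface measure on the unit sphere `S^{n-1} ⊆ ℝⁿ`. -/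
def sphereMeasure (n : ℕ) : Measure (sphere (0 : Euc n) 1) :=
  (volume : Measure (Euc n)).toSphere

/-- The half-wave propagator `e^{it|D|}`. -/
def halfWave {n : ℕ} (t : ℝ) (f : Euc n → ℂ) (x : Euc n) : ℂ :=
  ((2 * π) ^ n)⁻¹ •
    ∫ ξ : Euc n, Complex.exp (Complex.I * ((inner ℝ x ξ : ℝ) : ℂ)) *
      Complex.exp (Complex.I * (t : ℂ) * (‖ξ‖ : ℂ)) * FT f ξ

/-- The solution of the free wave equation with Cauchy data `f, g`, given by the
Fourier formula `u(t,x) = (2π)^{-n} ∫ e^{ix·ξ}(cos(t|ξ|) f̂(ξ) + sin(t|ξ|)/|ξ| ĝ(ξ)) dξ`. -/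
def waveSol {n : ℕ} (f g : Euc n → ℂ) (t : ℝ) (x : Euc n) : ℂ :=
  ((2 * π) ^ n)⁻¹ •
    ∫ ξ : Euc n, Complex.exp (Complex.I * ((inner ℝ x ξ : ℝ) : ℂ)) *
      (Complex.cos ((t : ℂ) * (‖ξ‖ : ℂ)) * FT f ξ +
        (Complex.sin ((t : ℂ) * (‖ξ‖ : ℂ)) / (‖ξ‖ : ℂ)) * FT g ξ)

/-- The final step in the proof of Corollary 2.3 of Smith–Sogge: with
`Γ_t = {(t',x) : t' ≥ 0, t-1 ≤ t'+|x| ≤ t+1}` and `r, s ≤ 2`,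
`∫_0^∞ ‖F·1_{Γ_t}‖²_{L^r_{t'}L^s_x} dt ≤ 2 ‖F‖²_{L^r_{t'}L^s_x([0,∞)×ℝⁿ)}`. -/
lemma rev_minkowski {α β : Type*} [MeasurableSpace α] [MeasurableSpace β]
    (μ : Measure α) (ν : Measure β) [SigmaFinite μ] [SigmaFinite ν]
    {p : ℝ} (hp : 0 < p) (hp1 : p ≤ 1) {f : α → β → ℝ≥0∞}
    (hf : Measurable (Function.uncurry f)) :
    ∫⁻ t, (∫⁻ y, f t y ^ p ∂ν) ^ (1 / p) ∂μ
      ≤ (∫⁻ y, (∫⁻ t, f t y ∂μ) ^ p ∂ν) ^ (1 / p) := by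
  rcases eq_or_lt_of_le hp1 with hp1' | hplt
  · subst hp1'
    simp only [ENNReal.rpow_one, one_div_one]
    exact le_of_eq (lintegral_lintegral_swap hf.aemeasurable)
  have hft : ∀ t, Measurable fun y => f t y := fun t => hf.comp measurable_prodMk_left
  have hΦm : Measurable fun y => ∫⁻ t, f t y ∂μ := hf.lintegral_prod_left'
  set Φ : β → ℝ≥0∞ := fun y => ∫⁻ t, f t y ∂μ with hΦdef
  set C := ∫⁻ y, Φ y ^ p ∂ν with hCdef
  by_cases hC : C = ∞
  · rw [hC, ENNReal.top_rpow_of_pos (by positivity)]; exact le_top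
  suffices key : ∀ ε : ℝ≥0∞, ε ≠ 0 → ε ≠ ∞ →
      ∫⁻ t, (∫⁻ y, f t y ^ p ∂ν) ^ (1 / p) ∂μ ≤ (C + ε) ^ (1 / p) by
    set L := ∫⁻ t, (∫⁻ y, f t y ^ p ∂ν) ^ (1 / p) ∂μ with hLdef
    have hLp : L ^ p ≤ C := by
      apply ENNReal.le_of_forall_pos_le_add
      intro ε hε _
      have h1 := key ε (by exact_mod_cast hε.ne') ENNReal.coe_ne_top
      calc L ^ p ≤ ((C + ε) ^ (1 / p)) ^ p := ENNReal.rpow_le_rpow h1 hp.le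
        _ = C + ε := by
          rw [← ENNReal.rpow_mul, one_div, inv_mul_cancel₀ hp.ne', ENNReal.rpow_one]
    calc L = (L ^ p) ^ (1 / p) := by
          rw [← ENNReal.rpow_mul, mul_one_div, div_self hp.ne', ENNReal.rpow_one]
      _ ≤ C ^ (1 / p) := ENNReal.rpow_le_rpow hLp (by positivity)
  intro ε hε0 hεtop
  obtain ⟨w, hwpos, hwm, hwint⟩ := exists_pos_lintegral_lt_of_sigmaFinite ν hε0
  set Ψ : β → ℝ≥0∞ := fun y => Φ y + (w y : ℝ≥0∞) ^ (1 / p) with hΨdef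
  have hΨm : Measurable Ψ := hΦm.add (hwm.coe_nnreal_ennreal.pow_const _)
  have hΨpos : ∀ y, Ψ y ≠ 0 := by
    intro y
    have h1 : (0 : ℝ≥0∞) < (w y : ℝ≥0∞) ^ (1 / p) :=
      ENNReal.rpow_pos (by exact_mod_cast (hwpos y)) ENNReal.coe_ne_top
    have h2 : (w y : ℝ≥0∞) ^ (1 / p) ≤ Ψ y := le_add_self
    exact (h1.trans_le h2).ne' 
  set D := ∫⁻ y, Ψ y ^ p ∂ν with hDdef
  have hD : D ≤ C + ε := by
    have h1 : ∀ y, Ψ y ^ p ≤ Φ y ^ p + (w y : ℝ≥0∞) := by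
      intro y
      have h2 := ENNReal.rpow_add_le_add_rpow (Φ y) ((w y : ℝ≥0∞) ^ (1 / p)) hp.le hp1
      rwa [← ENNReal.rpow_mul, one_div_mul_cancel hp.ne', ENNReal.rpow_one] at h2
    calc D ≤ ∫⁻ y, (Φ y ^ p + (w y : ℝ≥0∞)) ∂ν := lintegral_mono h1
      _ = C + ∫⁻ y, (w y : ℝ≥0∞) ∂ν := lintegral_add_left (hΦm.pow_const _) _
      _ ≤ C + ε := add_le_add_right hwint.le _
  have hDtop : D ≠ ∞ := (hD.trans_lt (by
    exact ENNReal.add_lt_top.mpr ⟨Ne.lt_top hC, Ne.lt_top hεtop⟩)).ne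
  by_cases hD0 : D = 0
  · have hae : ∀ᵐ y ∂ν, Ψ y ^ p = 0 :=
      (lintegral_eq_zero_iff (hΨm.pow_const _)).mp hD0
    have h1 : ∀ᵐ y ∂ν, Ψ y = 0 := by
      filter_upwards [hae] with y hy
      rcases ENNReal.rpow_eq_zero_iff.mp hy with h | h
      · exact h.1
      · exact absurd h.2 (not_lt.mpr hp.le)
    have hν : ν = 0 := by
      have h2 : ν {y | ¬ Ψ y = 0} = 0 := ae_iff.mp h1
      have h3 : {y | ¬ Ψ y = 0} = univ := eq_univ_of_forall fun y => hΨpos y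
      rw [h3] at h2
      exact Measure.measure_univ_eq_zero.mp h2
    calc ∫⁻ t, (∫⁻ y, f t y ^ p ∂ν) ^ (1 / p) ∂μ = ∫⁻ t, (0:ℝ≥0∞) ∂μ := by
          rw [hν]
          simp only [lintegral_zero_measure,
            ENNReal.zero_rpow_of_pos (by positivity : (0:ℝ) < 1/p)]
      _ = 0 := lintegral_zero
      _ ≤ (C + ε) ^ (1 / p) := zero_le
  have hΨfin : ∀ᵐ y ∂ν, Ψ y ≠ ∞ := by
    have := ae_lt_top (hΨm.pow_const p) hDtop
    filter_upwards [this] with y hy htop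
    rw [htop, ENNReal.top_rpow_of_pos hp] at hy
    exact absurd hy (lt_irrefl _)
  have hcon : (1 / p).HolderConjugate (1 / (1 - p)) := by
    refine Real.holderConjugate_iff.mpr ⟨?_, ?_⟩
    · exact (one_lt_one_div hp hplt)
    · simp only [one_div, inv_inv]; ring
  have claim1 : ∀ t, (∫⁻ y, f t y ^ p ∂ν)
      ≤ (∫⁻ y, f t y * Ψ y ^ (p - 1) ∂ν) ^ p * D ^ (1 - p) := by
    intro t
    have hae : (fun y => f t y ^ p)
        =ᵐ[ν] fun y => (f t y * Ψ y ^ (p - 1)) ^ p * (Ψ y ^ (p * (1 - p))) := by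
      filter_upwards [hΨfin] with y hy
      rw [ENNReal.mul_rpow_of_nonneg _ _ hp.le, ← ENNReal.rpow_mul, mul_assoc,
        ← ENNReal.rpow_add _ _ (hΨpos y) hy]
      have : (p - 1) * p + p * (1 - p) = 0 := by ring
      rw [this, ENNReal.rpow_zero, mul_one]
    rw [lintegral_congr_ae hae]
    have hH := ENNReal.lintegral_mul_le_Lp_mul_Lq ν hcon
      (f := fun y => (f t y * Ψ y ^ (p - 1)) ^ p)
      (g := fun y => Ψ y ^ (p * (1 - p)))
      (((hft t).mul (hΨm.pow_const _)).pow_const p).aemeasurable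
      ((hΨm.pow_const _)).aemeasurable
    refine hH.trans (le_of_eq ?_)
    congr 1
    · rw [one_div_one_div]
      congr 1
      refine lintegral_congr fun y => ?_
      rw [← ENNReal.rpow_mul, mul_one_div, div_self hp.ne', ENNReal.rpow_one]
    · rw [one_div_one_div]
      congr 1
      refine lintegral_congr fun y => ?_
      rw [← ENNReal.rpow_mul, mul_one_div, mul_div_assoc,
        div_self (by linarith : 1 - p ≠ 0), mul_one]
  have claim2 : ∀ t, (∫⁻ y, f t y ^ p ∂ν) ^ (1 / p)
      ≤ (∫⁻ y, f t y * Ψ y ^ (p - 1) ∂ν) * D ^ ((1 - p) / p) := by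
    intro t
    calc (∫⁻ y, f t y ^ p ∂ν) ^ (1 / p)
        ≤ ((∫⁻ y, f t y * Ψ y ^ (p - 1) ∂ν) ^ p * D ^ (1 - p)) ^ (1 / p) :=
          ENNReal.rpow_le_rpow (claim1 t) (by positivity)
      _ = (∫⁻ y, f t y * Ψ y ^ (p - 1) ∂ν) * D ^ ((1 - p) / p) := by
          rw [ENNReal.mul_rpow_of_nonneg _ _ (by positivity), ← ENNReal.rpow_mul,
            ← ENNReal.rpow_mul, mul_one_div, div_self hp.ne', ENNReal.rpow_one,
            mul_one_div]
  have hswap : ∫⁻ t, ∫⁻ y, f t y * Ψ y ^ (p - 1) ∂ν ∂μ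
      = ∫⁻ y, Φ y * Ψ y ^ (p - 1) ∂ν := by
    rw [lintegral_lintegral_swap (by
      exact (hf.mul ((hΨm.pow_const _).comp measurable_snd)).aemeasurable)]
    refine lintegral_congr fun y => ?_
    exact lintegral_mul_const _ (hf.comp measurable_prodMk_right)
  calc ∫⁻ t, (∫⁻ y, f t y ^ p ∂ν) ^ (1 / p) ∂μ
      ≤ ∫⁻ t, (∫⁻ y, f t y * Ψ y ^ (p - 1) ∂ν) * D ^ ((1 - p) / p) ∂μ :=
        lintegral_mono claim2
    _ = (∫⁻ t, ∫⁻ y, f t y * Ψ y ^ (p - 1) ∂ν ∂μ) * D ^ ((1 - p) / p) := by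
        rw [lintegral_mul_const]
        exact (hf.mul ((hΨm.pow_const _).comp measurable_snd)).lintegral_prod_right'
    _ = (∫⁻ y, Φ y * Ψ y ^ (p - 1) ∂ν) * D ^ ((1 - p) / p) := by rw [hswap]
    _ ≤ D * D ^ ((1 - p) / p) := by
        gcongr
        refine lintegral_mono fun y => ?_
        by_cases hy : Ψ y = ∞
        · rw [hy, ENNReal.top_rpow_of_neg (by linarith : p - 1 < 0), mul_zero]
          exact zero_le
        · have h1 : Φ y ≤ Ψ y := self_le_add_right _ _
          calc Φ y * Ψ y ^ (p - 1) ≤ Ψ y * Ψ y ^ (p - 1) := mul_le_mul_left h1 _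
            _ = Ψ y ^ p := by
              nth_rewrite 1 [← ENNReal.rpow_one (Ψ y)]
              rw [← ENNReal.rpow_add _ _ (hΨpos y) hy]
              norm_num
    _ = D ^ (1 / p) := by
        nth_rewrite 1 [← ENNReal.rpow_one D]
        rw [← ENNReal.rpow_add _ _ hD0 hDtop]
        congr 1
        field_simp
        ring
    _ ≤ (C + ε) ^ (1 / p) := ENNReal.rpow_le_rpow hD (by positivity)

set_option maxHeartbeats 1000000 in
theorem truncated_lightcone_mixed_norm
    {n : ℕ} (hn : 1 ≤ n) {r s : ℝ≥0∞}
    (hr1 : 1 ≤ r) (hr2 : r ≤ 2) (hs1 : 1 ≤ s) (hs2 : s ≤ 2)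
    (F : ℝ → Euc n → ℂ)
    (hF : Measurable (fun tx : ℝ × Euc n => F tx.1 tx.2)) :
    ∫⁻ t in Ioi (0 : ℝ),
        mixedNorm r s
          (restr {tx : ℝ × Euc n |
            0 ≤ tx.1 ∧ t - 1 ≤ tx.1 + ‖tx.2‖ ∧ tx.1 + ‖tx.2‖ ≤ t + 1} F) ^ 2
      ≤ 2 * mixedNorm r s (restr {tx : ℝ × Euc n | 0 ≤ tx.1} F) ^ 2 := by
  have hrtop : r ≠ ∞ := (hr2.trans_lt (by norm_num)).ne
  have hstop : s ≠ ∞ := (hs2.trans_lt (by norm_num)).ne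
  have hr0 : r ≠ 0 := (zero_lt_one.trans_le hr1).ne'
  have hs0 : s ≠ 0 := (zero_lt_one.trans_le hs1).ne'
  set r' := r.toReal with hr'def
  set s' := s.toReal with hs'def
  have hr'1 : 1 ≤ r' := by
    have := ENNReal.toReal_mono hrtop hr1; simpa using this
  have hr'2 : r' ≤ 2 := by
    have := ENNReal.toReal_mono (by norm_num : (2:ℝ≥0∞) ≠ ∞) hr2; simpa using this
  have hs'1 : 1 ≤ s' := by
    have := ENNReal.toReal_mono hstop hs1; simpa using this
  have hs'2 : s' ≤ 2 := by
    have := ENNReal.toReal_mono (by norm_num : (2:ℝ≥0∞) ≠ ∞) hs2; simpa using this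
  have hr'pos : (0:ℝ) < r' := zero_lt_one.trans_le hr'1
  have hs'pos : (0:ℝ) < s' := zero_lt_one.trans_le hs'1
  have hpr : (0:ℝ) < r'/2 := by positivity
  have hps : (0:ℝ) < s'/2 := by positivity
  have hpr1 : r'/2 ≤ 1 := by linarith
  have hps1 : s'/2 ≤ 1 := by linarith
  set G : ℝ × Euc n → ℝ≥0∞ := fun q => (‖F q.1 q.2‖₊ : ℝ≥0∞) with hGdef
  have hGm : Measurable G := hF.nnnorm.coe_nnreal_ennreal
  set Q : Set (ℝ × Euc n) := {tx | 0 ≤ tx.1} with hQdef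
  -- mixed norm formula
  have hmix : ∀ A : Set (ℝ × Euc n), mixedNorm r s (restr A F)
      = (∫⁻ t' : ℝ,
          (∫⁻ x : Euc n, A.indicator (fun q => G q ^ s') (t', x)) ^ (r' / s')) ^ (1 / r') := by
    intro A
    simp only [mixedNorm, LpT]
    rw [if_neg hrtop]
    rw [← hr'def]
    congr 1
    refine lintegral_congr fun t' => ?_
    rw [eLpNorm_eq_lintegral_rpow_enorm_toReal hs0 hstop, ← hs'def, ← ENNReal.rpow_mul,
      one_div_mul_eq_div]
    congr 1
    refine lintegral_congr fun x => ?_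
    by_cases h : (t', x) ∈ A
    · simp only [restr, Set.indicator_of_mem h, hGdef, enorm_eq_nnnorm]
    · simp only [restr, Set.indicator_of_notMem h]
      simp [ENNReal.zero_rpow_of_pos hs'pos]
  -- square of mixed norm
  have hsq : ∀ X : ℝ≥0∞, (X ^ (1/r')) ^ 2 = X ^ (2/r') := by
    intro X
    rw [← ENNReal.rpow_natCast (X ^ (1/r')) 2, ← ENNReal.rpow_mul]
    congr 1
    push_cast
    ring
  set J : ℝ → ℝ → ℝ≥0∞ := fun t t' =>
    (∫⁻ x : Euc n, ({tx : ℝ × Euc n |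
      0 ≤ tx.1 ∧ t - 1 ≤ tx.1 + ‖tx.2‖ ∧ tx.1 + ‖tx.2‖ ≤ t + 1}).indicator
        (fun q => G q ^ s') (t', x)) ^ (2/s') with hJdef
  set e : ℝ → ℝ≥0∞ := fun t' =>
    ∫⁻ x : Euc n, Q.indicator (fun q => G q ^ s') (t', x) with hedef
  -- measurability of J
  have hJm : Measurable (Function.uncurry J) := by
    have hTm : MeasurableSet {px : (ℝ × ℝ) × Euc n |
        0 ≤ px.1.2 ∧ px.1.1 - 1 ≤ px.1.2 + ‖px.2‖ ∧ px.1.2 + ‖px.2‖ ≤ px.1.1 + 1} := by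
      refine MeasurableSet.inter (measurableSet_le measurable_const measurable_fst.snd) ?_
      exact MeasurableSet.inter
        (measurableSet_le (measurable_fst.fst.sub measurable_const)
          (measurable_fst.snd.add measurable_snd.norm))
        (measurableSet_le (measurable_fst.snd.add measurable_snd.norm)
          (measurable_fst.fst.add measurable_const))
    have heq : (fun px : (ℝ × ℝ) × Euc n =>
        ({tx : ℝ × Euc n | 0 ≤ tx.1 ∧ px.1.1 - 1 ≤ tx.1 + ‖tx.2‖ ∧
          tx.1 + ‖tx.2‖ ≤ px.1.1 + 1}).indicator (fun q => G q ^ s') (px.1.2, px.2))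
        = Set.indicator {px : (ℝ × ℝ) × Euc n |
            0 ≤ px.1.2 ∧ px.1.1 - 1 ≤ px.1.2 + ‖px.2‖ ∧ px.1.2 + ‖px.2‖ ≤ px.1.1 + 1}
          (fun px => G (px.1.2, px.2) ^ s') := by
      funext px
      simp only [Set.indicator_apply, Set.mem_setOf_eq]
    have hb : Measurable fun px : (ℝ × ℝ) × Euc n =>
        ({tx : ℝ × Euc n | 0 ≤ tx.1 ∧ px.1.1 - 1 ≤ tx.1 + ‖tx.2‖ ∧
          tx.1 + ‖tx.2‖ ≤ px.1.1 + 1}).indicator (fun q => G q ^ s') (px.1.2, px.2) := by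
      rw [heq]
      exact ((hGm.comp (measurable_fst.snd.prodMk measurable_snd)).pow_const _).indicator hTm
    have hinner : Measurable fun p : ℝ × ℝ =>
        ∫⁻ x : Euc n, ({tx : ℝ × Euc n | 0 ≤ tx.1 ∧ p.1 - 1 ≤ tx.1 + ‖tx.2‖ ∧
          tx.1 + ‖tx.2‖ ≤ p.1 + 1}).indicator (fun q => G q ^ s') (p.2, x) :=
      hb.lintegral_prod_right'
    simp only [hJdef, Function.uncurry]
    exact hinner.pow_const _
  -- Step B : for fixed t'
  have stepB : ∀ t' : ℝ, (∫⁻ t in Ioi (0:ℝ), J t t') ≤ 2 * e t' ^ (2/s') := by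
    intro t'
    set K : ℝ → Euc n → ℝ≥0∞ := fun t x =>
      ({tx : ℝ × Euc n | 0 ≤ tx.1 ∧ t - 1 ≤ tx.1 + ‖tx.2‖ ∧
        tx.1 + ‖tx.2‖ ≤ t + 1}).indicator (fun q => G q ^ (2:ℝ)) (t', x) with hKdef
    have hKm : Measurable (Function.uncurry K) := by
      have hS2 : MeasurableSet {p : ℝ × Euc n |
          0 ≤ t' ∧ p.1 - 1 ≤ t' + ‖p.2‖ ∧ t' + ‖p.2‖ ≤ p.1 + 1} := by
        refine MeasurableSet.inter (MeasurableSet.const _) ?_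
        exact MeasurableSet.inter
          (measurableSet_le (measurable_fst.sub measurable_const)
            (measurable_const.add measurable_snd.norm))
          (measurableSet_le (measurable_const.add measurable_snd.norm)
            (measurable_fst.add measurable_const))
      have heq : Function.uncurry K = Set.indicator {p : ℝ × Euc n |
          0 ≤ t' ∧ p.1 - 1 ≤ t' + ‖p.2‖ ∧ t' + ‖p.2‖ ≤ p.1 + 1}
          (fun p => G (t', p.2) ^ (2:ℝ)) := by
        funext p
        simp only [hKdef, Function.uncurry, Set.indicator_apply, Set.mem_setOf_eq]
      rw [heq]
      exact ((hGm.comp (measurable_const.prodMk measurable_snd)).pow_const _).indicator hS2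
    have hJeq : ∀ t, J t t' = (∫⁻ x : Euc n, K t x ^ (s'/2)) ^ (1/(s'/2)) := by
      intro t
      have h1 : ∀ x, K t x ^ (s'/2)
          = ({tx : ℝ × Euc n | 0 ≤ tx.1 ∧ t - 1 ≤ tx.1 + ‖tx.2‖ ∧
              tx.1 + ‖tx.2‖ ≤ t + 1}).indicator (fun q => G q ^ s') (t', x) := by
        intro x
        simp only [hKdef]
        by_cases h : (t', x) ∈ {tx : ℝ × Euc n | 0 ≤ tx.1 ∧ t - 1 ≤ tx.1 + ‖tx.2‖ ∧
            tx.1 + ‖tx.2‖ ≤ t + 1}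
        · rw [Set.indicator_of_mem h, Set.indicator_of_mem h, ← ENNReal.rpow_mul]
          congr 1
          ring
        · rw [Set.indicator_of_notMem h, Set.indicator_of_notMem h,
            ENNReal.zero_rpow_of_pos hps]
      simp only [hJdef]
      rw [lintegral_congr h1, one_div_div]
    have hKx : ∀ x : Euc n, (∫⁻ t in Ioi (0:ℝ), K t x)
        ≤ 2 * Q.indicator (fun q => G q ^ (2:ℝ)) (t', x) := by
      intro x
      by_cases ht' : 0 ≤ t'
      · have hmemQ : (t', x) ∈ Q := ht'
        have hK2 : ∀ t, K t x = (Icc (t' + ‖x‖ - 1) (t' + ‖x‖ + 1)).indicator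
            (fun _ => G (t', x) ^ (2:ℝ)) t := by
          intro t
          simp only [hKdef]
          by_cases h : (t', x) ∈ {tx : ℝ × Euc n | 0 ≤ tx.1 ∧ t - 1 ≤ tx.1 + ‖tx.2‖ ∧
              tx.1 + ‖tx.2‖ ≤ t + 1}
          · obtain ⟨-, h2, h3⟩ := id h
            rw [Set.indicator_of_mem h, Set.indicator_of_mem
              (by constructor <;> [linarith; linarith] : t ∈ Icc (t' + ‖x‖ - 1) (t' + ‖x‖ + 1))]
          · rw [Set.indicator_of_notMem h, Set.indicator_of_notMem ?_]
            intro hmem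
            obtain ⟨hm1, hm2⟩ := hmem
            exact h ⟨ht', by linarith, by linarith⟩
        calc (∫⁻ t in Ioi (0:ℝ), K t x)
            ≤ ∫⁻ t : ℝ, (Icc (t' + ‖x‖ - 1) (t' + ‖x‖ + 1)).indicator
                (fun _ => G (t', x) ^ (2:ℝ)) t := by
              rw [lintegral_congr hK2]
              exact setLIntegral_le_lintegral _ _
          _ = G (t', x) ^ (2:ℝ) * volume (Icc (t' + ‖x‖ - 1) (t' + ‖x‖ + 1)) :=
              lintegral_indicator_const measurableSet_Icc _
          _ = 2 * Q.indicator (fun q => G q ^ (2:ℝ)) (t', x) := by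
              rw [Set.indicator_of_mem hmemQ, Real.volume_Icc]
              have h2 : t' + ‖x‖ + 1 - (t' + ‖x‖ - 1) = 2 := by ring
              rw [h2, mul_comm]
              congr 1
              norm_num
      · have h0 : ∀ t, K t x = 0 := by
          intro t
          simp only [hKdef]
          exact Set.indicator_of_notMem (fun h => ht' h.1) _
        rw [lintegral_congr h0, lintegral_zero]
        exact zero_le
    calc (∫⁻ t in Ioi (0:ℝ), J t t')
        = ∫⁻ t in Ioi (0:ℝ), (∫⁻ x : Euc n, K t x ^ (s'/2)) ^ (1/(s'/2)) :=
          lintegral_congr hJeq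
      _ ≤ (∫⁻ x : Euc n, (∫⁻ t in Ioi (0:ℝ), K t x) ^ (s'/2)) ^ (1/(s'/2)) :=
          rev_minkowski _ _ hps hps1 hKm
      _ ≤ (∫⁻ x : Euc n, (2 * Q.indicator (fun q => G q ^ (2:ℝ)) (t', x)) ^ (s'/2))
            ^ (1/(s'/2)) := by
          refine ENNReal.rpow_le_rpow (lintegral_mono fun x => ?_) (by positivity)
          exact ENNReal.rpow_le_rpow (hKx x) hps.le
      _ = 2 * e t' ^ (2/s') := by
          have h2 : ∀ x : Euc n, (2 * Q.indicator (fun q => G q ^ (2:ℝ)) (t', x)) ^ (s'/2)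
              = (2:ℝ≥0∞) ^ (s'/2) * Q.indicator (fun q => G q ^ s') (t', x) := by
            intro x
            rw [ENNReal.mul_rpow_of_nonneg _ _ hps.le]
            congr 1
            by_cases h : (t', x) ∈ Q
            · rw [Set.indicator_of_mem h, Set.indicator_of_mem h, ← ENNReal.rpow_mul]
              congr 1
              ring
            · rw [Set.indicator_of_notMem h, Set.indicator_of_notMem h,
                ENNReal.zero_rpow_of_pos hps]
          rw [lintegral_congr h2,
            lintegral_const_mul' _ _ (ENNReal.rpow_ne_top_of_nonneg hps.le (by norm_num)),
            ENNReal.mul_rpow_of_nonneg _ _ (by positivity), ← ENNReal.rpow_mul]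
          congr 2
          · rw [mul_one_div, div_self hps.ne', ENNReal.rpow_one]
          · rw [one_div_div]
  -- Main chain
  calc ∫⁻ t in Ioi (0:ℝ),
        mixedNorm r s
          (restr {tx : ℝ × Euc n |
            0 ≤ tx.1 ∧ t - 1 ≤ tx.1 + ‖tx.2‖ ∧ tx.1 + ‖tx.2‖ ≤ t + 1} F) ^ 2
      = ∫⁻ t in Ioi (0:ℝ), (∫⁻ t' : ℝ, J t t' ^ (r'/2)) ^ (1/(r'/2)) := by
        refine lintegral_congr fun t => ?_
        rw [hmix, hsq]
        congr 1
        · refine lintegral_congr fun t' => ?_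
          simp only [hJdef]
          rw [← ENNReal.rpow_mul]
          congr 1
          ring
        · rw [one_div_div]
    _ ≤ (∫⁻ t' : ℝ, (∫⁻ t in Ioi (0:ℝ), J t t') ^ (r'/2)) ^ (1/(r'/2)) :=
        rev_minkowski _ _ hpr hpr1 hJm
    _ ≤ (∫⁻ t' : ℝ, (2 * e t' ^ (2/s')) ^ (r'/2)) ^ (1/(r'/2)) := by
        refine ENNReal.rpow_le_rpow (lintegral_mono fun t' => ?_) (by positivity)
        exact ENNReal.rpow_le_rpow (stepB t') hpr.le
    _ = 2 * mixedNorm r s (restr Q F) ^ 2 := by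
        rw [hmix Q, hsq]
        have h3 : ∀ t' : ℝ, (2 * e t' ^ (2/s')) ^ (r'/2)
            = (2:ℝ≥0∞) ^ (r'/2) * e t' ^ (r'/s') := by
          intro t'
          rw [ENNReal.mul_rpow_of_nonneg _ _ hpr.le, ← ENNReal.rpow_mul]
          congr 2
          ring
        rw [lintegral_congr h3,
          lintegral_const_mul' _ _ (ENNReal.rpow_ne_top_of_nonneg hpr.le (by norm_num)),
          ENNReal.mul_rpow_of_nonneg _ _ (by positivity), ← ENNReal.rpow_mul]
        congr 2
        · rw [mul_one_div, div_self hpr.ne', ENNReal.rpow_one]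
        · rw [one_div_div]
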